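/- Let n ≥ 1 and p < 0. For every compact set K ⊆ ℝⁿ containing more than one point, cap_p(K) ≥ 2^{1/p} · diam(K); equivalently, diam(K)/cap_p(K) ≤ 2^{−1/p}, with equality for every two-point set. Thus each two-point set maximizes the ratio diam(K)/cap_p(K). -/

import Mathlib

open MeasureTheory Metric Set ENNReal Filter

noncomputable section

namespace Riesz

variable {E : Type*} [MeasurableSpace E] [PseudoMetricSpace E]

/-- Borel probability measures supported on `K` (i.e. giving full mass to `K`). -/
def probOn (K : Set E) : Set (Measure E) :=
  {μ | IsProbabilityMeasure μ ∧ μ Kᶜ = 0}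

/-- The Riesz `p`-energy `∬ |x-y|^{-p} dμ dμ` of a measure `μ`, valued in `ℝ≥0∞`.
(The kernel `(dist x y)^{-p}`, computed in `ℝ≥0∞`, is `∞` on the diagonal when `p > 0`
and `0` on the diagonal when `p < 0`.) -/
def energyOf (p : ℝ) (μ : Measure E) : ℝ≥0∞ :=
  ∫⁻ z : E × E, (ENNReal.ofReal (dist z.1 z.2)) ^ (-p) ∂(μ.prod μ)

/-- The Riesz `p`-energy of a set `K`, for `p ≠ 0`: a supremum over probability measures
on `K` when `p < 0`, an infimum when `p > 0`.  (For `K = ∅` this gives `0` when `p < 0`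
and `∞` when `p > 0`.) -/
def energy (p : ℝ) (K : Set E) : ℝ≥0∞ :=
  if p < 0 then ⨆ μ ∈ probOn K, energyOf p μ
  else ⨅ μ ∈ probOn K, energyOf p μ

/-- The logarithmic energy `∬ log (1/|x-y|) dμ dμ` of a measure, as an extended real:
the positive part (with value `∞` on the diagonal) minus the negative part. -/
def logEnergyOf (μ : Measure E) : EReal :=
  ((∫⁻ z : E × E, (if dist z.1 z.2 = 0 then ⊤ else
      ENNReal.ofReal (Real.log (1 / dist z.1 z.2))) ∂(μ.prod μ) : ℝ≥0∞) : EReal)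
  - ((∫⁻ z : E × E, ENNReal.ofReal (Real.log (dist z.1 z.2)) ∂(μ.prod μ) : ℝ≥0∞) : EReal)

/-- The logarithmic energy of a set `K`: infimum over probability measures on `K`. -/
def logEnergy (K : Set E) : EReal :=
  ⨅ μ ∈ probOn K, logEnergyOf μ

/-- The Riesz `p`-capacity of a set: `V_p(K)^{-1/p}` for `p ≠ 0`, and the logarithmic
capacity `exp(-V_log(K))` for `p = 0`. -/
def cap (p : ℝ) (K : Set E) : ℝ :=
  if p = 0 then
    (if logEnergy K = ⊤ then 0 else Real.exp (-(logEnergy K).toReal))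
  else ((energy p K).toReal) ^ (-1 / p)

/-- `μ` is a `p`-equilibrium measure of `K`: a probability measure on `K` whose
`p`-energy attains the optimal `p`-energy of `K`. -/
def IsEquilibrium (p : ℝ) (K : Set E) (μ : Measure E) : Prop :=
  μ ∈ probOn K ∧ energyOf p μ = energy p K

/-- A set `Z` has inner `p`-capacity zero: every compact subset has `p`-capacity zero. -/
def InnerCapZero (p : ℝ) (Z : Set E) : Prop :=
  ∀ Z' ⊆ Z, IsCompact Z' → cap p Z' = 0

end Riesz

end


set_option linter.unusedSectionVars false
set_option maxHeartbeats 1000000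

noncomputable section
namespace RieszAux

open MeasureTheory Metric Set ENNReal

variable {E : Type*} [MeasurableSpace E] [MetricSpace E] [OpensMeasurableSpace E]
  [MeasurableSingletonClass E]

lemma prod_compl_zero {K : Set E} {μ : Measure E} [SFinite μ] (h0 : μ Kᶜ = 0) :
    μ.prod μ ((K ×ˢ K)ᶜ) = 0 := by
  have hsub : (K ×ˢ K)ᶜ ⊆ (Kᶜ ×ˢ univ) ∪ (univ ×ˢ Kᶜ) := by
    intro z hz
    simp only [Set.mem_compl_iff, Set.mem_prod, not_and_or] at hz
    simp only [Set.mem_union, Set.mem_prod, Set.mem_univ, Set.mem_compl_iff, and_true, true_and]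
    tauto
  refine measure_mono_null hsub ?_
  refine le_antisymm ((measure_union_le _ _).trans ?_) zero_le
  rw [Measure.prod_prod, Measure.prod_prod, h0]
  simp

lemma energyOf_le_diam {p : ℝ} (hp : p < 0) {K : Set E} (hb : Bornology.IsBounded K)
    {μ : Measure E} (hμ : μ ∈ Riesz.probOn K) :
    Riesz.energyOf p μ ≤ ENNReal.ofReal (diam K) ^ (-p) := by
  haveI := hμ.1
  have hnull : μ.prod μ ((K ×ˢ K)ᶜ) = 0 := prod_compl_zero hμ.2
  have hae : ∀ᵐ z ∂(μ.prod μ),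
      (ENNReal.ofReal (dist z.1 z.2)) ^ (-p) ≤ ENNReal.ofReal (diam K) ^ (-p) := by
    filter_upwards [measure_eq_zero_iff_ae_notMem.mp hnull] with z hz
    simp only [Set.mem_compl_iff, not_not] at hz
    have hd : dist z.1 z.2 ≤ diam K := dist_le_diam_of_mem hb hz.1 hz.2
    exact ENNReal.rpow_le_rpow (ENNReal.ofReal_le_ofReal hd) (by linarith)
  calc Riesz.energyOf p μ ≤ ∫⁻ _ : E × E, ENNReal.ofReal (diam K) ^ (-p) ∂(μ.prod μ) :=
        lintegral_mono_ae hae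
    _ = ENNReal.ofReal (diam K) ^ (-p) := by
        rw [lintegral_const, measure_univ, mul_one]

/-- The half-sum of diracs at two points. -/
def halfDirac (x y : E) : Measure E := (2 : ℝ≥0∞)⁻¹ • (Measure.dirac x + Measure.dirac y)

lemma halfDirac_mem {K : Set E} {x y : E} (hx : x ∈ K) (hy : y ∈ K) :
    halfDirac x y ∈ Riesz.probOn K := by
  constructor
  · constructor
    simp [halfDirac, Measure.dirac_apply]
    rw [← two_mul, ENNReal.mul_inv_cancel two_ne_zero ENNReal.ofNat_ne_top]
  · simp [halfDirac, Measure.dirac_apply, indicator_apply, hx, hy]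

lemma halfDirac_singleton {x y : E} (hne : x ≠ y) :
    halfDirac x y {x} = 2⁻¹ ∧ halfDirac x y {y} = 2⁻¹ := by
  constructor <;>
  · simp [halfDirac, Measure.dirac_apply, indicator_apply, hne, hne.symm]

lemma energyOf_halfDirac_ge {p : ℝ} (hp : p < 0) {x y : E} (hne : x ≠ y) :
    ENNReal.ofReal (dist x y) ^ (-p) * 2⁻¹ ≤ Riesz.energyOf p (halfDirac x y) := by
  set μ := halfDirac x y
  haveI : IsProbabilityMeasure μ := (halfDirac_mem (mem_insert x {y}) (mem_insert_of_mem x rfl)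
    (K := ({x, y} : Set E))).1
  set c : ℝ≥0∞ := ENNReal.ofReal (dist x y) ^ (-p)
  set S : Set (E × E) := ({x} ×ˢ {y}) ∪ ({y} ×ˢ {x})
  have hS : MeasurableSet S :=
    ((measurableSet_singleton x).prod (measurableSet_singleton y)).union
      ((measurableSet_singleton y).prod (measurableSet_singleton x))
  have hνS : μ.prod μ S = 2⁻¹ := by
    have hdisj : Disjoint (({x} : Set E) ×ˢ ({y} : Set E)) (({y} : Set E) ×ˢ ({x} : Set E)) := by
      rw [Set.disjoint_iff]
      rintro ⟨a, b⟩ ⟨⟨ha, hb⟩, ⟨ha', hb'⟩⟩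
      simp only [Set.mem_singleton_iff] at *
      exact hne (ha ▸ ha' ▸ rfl)
    rw [measure_union hdisj ((measurableSet_singleton y).prod (measurableSet_singleton x)),
      Measure.prod_prod, Measure.prod_prod, (halfDirac_singleton hne).1,
      (halfDirac_singleton hne).2, ← two_mul, ← mul_assoc,
      ENNReal.mul_inv_cancel two_ne_zero ENNReal.ofNat_ne_top, one_mul]
  have hlb : ∀ z : E × E, S.indicator (fun _ => c) z ≤
      (ENNReal.ofReal (dist z.1 z.2)) ^ (-p) := by
    intro z
    by_cases hz : z ∈ S
    · rw [Set.indicator_of_mem hz]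
      rcases hz with ⟨h1, h2⟩ | ⟨h1, h2⟩ <;>
        simp only [Set.mem_singleton_iff] at h1 h2 <;>
        rw [h1, h2]
      · rw [dist_comm]
    · rw [Set.indicator_of_notMem hz]; exact zero_le
  calc c * 2⁻¹ = c * μ.prod μ S := by rw [hνS]
    _ = ∫⁻ z, S.indicator (fun _ => c) z ∂(μ.prod μ) := (lintegral_indicator_const hS c).symm
    _ ≤ Riesz.energyOf p μ := lintegral_mono hlb

lemma energyOf_pair_le {p : ℝ} (hp : p < 0) {x y : E} (hne : x ≠ y)
    {μ : Measure E} (hμ : μ ∈ Riesz.probOn ({x, y} : Set E)) :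
    Riesz.energyOf p μ ≤ ENNReal.ofReal (dist x y) ^ (-p) * 2⁻¹ := by
  haveI := hμ.1
  set c : ℝ≥0∞ := ENNReal.ofReal (dist x y) ^ (-p) with hc
  set S : Set (E × E) := ({x} ×ˢ {y}) ∪ ({y} ×ˢ {x}) with hSdef
  have hS : MeasurableSet S :=
    ((measurableSet_singleton x).prod (measurableSet_singleton y)).union
      ((measurableSet_singleton y).prod (measurableSet_singleton x))
  set a := μ {x} with hadef
  set b := μ {y} with hbdef
  have hKm : MeasurableSet ({x, y} : Set E) :=
    (measurableSet_singleton y).insert x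
  have hab : a + b = 1 := by
    have h1 : μ {x, y} = 1 := by
      have h2 := measure_add_measure_compl (μ := μ) hKm
      rw [hμ.2, add_zero, measure_univ] at h2
      exact h2
    rw [← h1, show ({x, y} : Set E) = {x} ∪ {y} by rfl,
      measure_union (by simpa using hne) (measurableSet_singleton y)]
  have hat : a ≠ ⊤ := by
    refine ne_top_of_le_ne_top (by norm_num) (le_trans ?_ hab.le); exact le_self_add
  have hbt : b ≠ ⊤ := by
    refine ne_top_of_le_ne_top (by norm_num) (le_trans ?_ hab.le); exact le_add_self
  have hprod : a * b ≤ ENNReal.ofReal (1/4) := by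
    have hsum : a.toReal + b.toReal = 1 := by
      rw [← ENNReal.toReal_add hat hbt, hab, ENNReal.toReal_one]
    have ha0 : (0:ℝ) ≤ a.toReal := ENNReal.toReal_nonneg
    have hb0 : (0:ℝ) ≤ b.toReal := ENNReal.toReal_nonneg
    have h4 : a.toReal * b.toReal ≤ 1/4 := by nlinarith [sq_nonneg (a.toReal - b.toReal)]
    calc a * b = ENNReal.ofReal (a.toReal * b.toReal) := by
          rw [ENNReal.ofReal_mul ENNReal.toReal_nonneg, ENNReal.ofReal_toReal hat,
            ENNReal.ofReal_toReal hbt]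
      _ ≤ ENNReal.ofReal (1/4) := ENNReal.ofReal_le_ofReal h4
  have hνS : μ.prod μ S ≤ 2⁻¹ := by
    calc μ.prod μ S ≤ μ.prod μ ({x} ×ˢ {y}) + μ.prod μ ({y} ×ˢ {x}) := measure_union_le _ _
      _ = a * b + b * a := by rw [Measure.prod_prod, Measure.prod_prod]
      _ = 2 * (a * b) := by ring
      _ ≤ 2 * ENNReal.ofReal (1/4) := by exact mul_le_mul_right hprod 2
      _ = 2⁻¹ := by
          rw [show (2 : ℝ≥0∞) = ENNReal.ofReal 2 by simp, ← ENNReal.ofReal_mul (by norm_num)]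
          norm_num
          rw [show (2 : ℝ≥0∞) = ENNReal.ofReal 2 by simp, ← ENNReal.ofReal_inv_of_pos (by norm_num)]
          norm_num
  have hnull : μ.prod μ ((({x, y} : Set E) ×ˢ ({x, y} : Set E))ᶜ) = 0 := prod_compl_zero hμ.2
  have hae : ∀ᵐ z ∂(μ.prod μ),
      (ENNReal.ofReal (dist z.1 z.2)) ^ (-p) ≤ S.indicator (fun _ => c) z := by
    filter_upwards [measure_eq_zero_iff_ae_notMem.mp hnull] with z hz
    simp only [Set.mem_compl_iff, not_not, Set.mem_prod, Set.mem_insert_iff,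
      Set.mem_singleton_iff] at hz
    obtain ⟨h1, h2⟩ := hz
    rcases h1 with h1 | h1 <;> rcases h2 with h2 | h2
    · rw [h1, h2]; simp [ENNReal.zero_rpow_of_pos (by linarith : (0:ℝ) < -p)]
    · have hzS : z ∈ S := Or.inl ⟨by simp [h1], by simp [h2]⟩
      rw [Set.indicator_of_mem hzS, h1, h2]
    · have hzS : z ∈ S := Or.inr ⟨by simp [h1], by simp [h2]⟩
      rw [Set.indicator_of_mem hzS, h1, h2, dist_comm]
    · rw [h1, h2]; simp [ENNReal.zero_rpow_of_pos (by linarith : (0:ℝ) < -p)]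
  calc Riesz.energyOf p μ ≤ ∫⁻ z, S.indicator (fun _ => c) z ∂(μ.prod μ) := lintegral_mono_ae hae
    _ = c * μ.prod μ S := lintegral_indicator_const hS c
    _ ≤ c * 2⁻¹ := mul_le_mul_right hνS c


lemma energy_le_diam {p : ℝ} (hp : p < 0) {K : Set E} (hb : Bornology.IsBounded K) :
    Riesz.energy p K ≤ ENNReal.ofReal (diam K) ^ (-p) := by
  rw [Riesz.energy, if_pos hp]
  exact iSup₂_le fun μ hμ => energyOf_le_diam hp hb hμ

lemma energy_ge {p : ℝ} (hp : p < 0) {K : Set E} {x y : E} (hx : x ∈ K) (hy : y ∈ K)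
    (hne : x ≠ y) :
    ENNReal.ofReal (dist x y) ^ (-p) * 2⁻¹ ≤ Riesz.energy p K := by
  rw [Riesz.energy, if_pos hp]
  exact le_iSup₂_of_le (halfDirac x y) (halfDirac_mem hx hy) (energyOf_halfDirac_ge hp hne)

lemma energy_pair {p : ℝ} (hp : p < 0) {x y : E} (hne : x ≠ y) :
    Riesz.energy p ({x, y} : Set E) = ENNReal.ofReal (dist x y) ^ (-p) * 2⁻¹ := by
  refine le_antisymm ?_ (energy_ge hp (mem_insert x {y}) (mem_insert_of_mem x rfl) hne)
  rw [Riesz.energy, if_pos hp]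
  exact iSup₂_le fun μ hμ => energyOf_pair_le hp hne hμ

lemma rpow_calc {p d : ℝ} (hp : p < 0) (hd : 0 < d) :
    (d ^ (-p) / 2) ^ (-1 / p) = d * 2 ^ (1 / p) := by
  rw [Real.div_rpow (Real.rpow_nonneg hd.le _) (by norm_num : (0:ℝ) ≤ 2),
    ← Real.rpow_mul hd.le]
  have h1 : -p * (-1 / p) = 1 := by field_simp; exact div_self hp.ne
  rw [h1, Real.rpow_one, neg_div, Real.rpow_neg (by norm_num : (0:ℝ) ≤ 2), div_inv_eq_mul]

lemma toReal_half_c {p d : ℝ} (hd : 0 ≤ d) :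
    (ENNReal.ofReal d ^ (-p) * 2⁻¹).toReal = d ^ (-p) / 2 := by
  rw [ENNReal.toReal_mul, ← ENNReal.toReal_rpow, ENNReal.toReal_ofReal hd,
    ENNReal.toReal_inv, ENNReal.toReal_ofNat, div_eq_mul_inv]

end RieszAux
end

/-- Minimizing capacity for given diameter: for `n ≥ 1`, `p < 0` and compact `K ⊆ ℝⁿ`
with more than one point, `cap_p(K) ≥ 2^(1/p)·diam K`, equivalently
`diam K / cap_p(K) ≤ 2^(-1/p)`, with equality for every two-point set. -/
theorem statement14 (n : ℕ) (hn : 1 ≤ n) (p : ℝ) (hp : p < 0)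
    (K : Set (EuclideanSpace ℝ (Fin n))) (hK : IsCompact K) (hK2 : K.Nontrivial) :
    Riesz.cap p K ≥ (2 : ℝ) ^ (1 / p) * Metric.diam K ∧
    Metric.diam K / Riesz.cap p K ≤ (2 : ℝ) ^ (-1 / p) ∧
    ∀ x y : EuclideanSpace ℝ (Fin n), x ≠ y →
      Metric.diam ({x, y} : Set (EuclideanSpace ℝ (Fin n))) /
        Riesz.cap p ({x, y} : Set (EuclideanSpace ℝ (Fin n))) = (2 : ℝ) ^ (-1 / p) := by
  have h2p : (0:ℝ) < 2 ^ (1 / p) := Real.rpow_pos_of_pos two_pos _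
  have h2n : (0:ℝ) < 2 ^ (-1 / p) := Real.rpow_pos_of_pos two_pos _
  have h2mul : (2:ℝ) ^ (-1 / p) * 2 ^ (1 / p) = 1 := by
    rw [← Real.rpow_add two_pos, show -1/p + 1/p = 0 by ring, Real.rpow_zero]
  have hexp : 0 < -1 / p := by
    rw [neg_div]; simpa using one_div_neg.mpr hp
  -- capacity of a pair
  have cap_pair : ∀ x y : EuclideanSpace ℝ (Fin n), x ≠ y →
      Riesz.cap p ({x, y} : Set (EuclideanSpace ℝ (Fin n))) = dist x y * 2 ^ (1 / p) := by
    intro x y hne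
    have hd : 0 < dist x y := dist_pos.mpr hne
    rw [Riesz.cap, if_neg hp.ne, RieszAux.energy_pair hp hne, RieszAux.toReal_half_c hd.le,
      RieszAux.rpow_calc hp hd]
  -- general lower bound on capacity
  obtain ⟨x0, hx0, y0, hy0, hne0⟩ := hK2
  have hb : Bornology.IsBounded K := hK.isBounded
  have hdiam : 0 < diam K := lt_of_lt_of_le (dist_pos.mpr hne0) (dist_le_diam_of_mem hb hx0 hy0)
  have hEne : Riesz.energy p K ≠ ⊤ :=
    ne_top_of_le_ne_top (ENNReal.rpow_ne_top_of_nonneg (by linarith) ENNReal.ofReal_ne_top)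
      (RieszAux.energy_le_diam hp hb)
  set T := (Riesz.energy p K).toReal with hT
  have hcapK : Riesz.cap p K = T ^ (-1 / p) := by rw [Riesz.cap, if_neg hp.ne]
  have hTlb : ∀ x ∈ K, ∀ y ∈ K, x ≠ y → dist x y ^ (-p) / 2 ≤ T := by
    intro x hx y hy hne
    have h1 := RieszAux.energy_ge hp hx hy hne
    have h2 := ENNReal.toReal_mono hEne h1
    rwa [RieszAux.toReal_half_c dist_nonneg] at h2
  have hT0 : 0 < T := by
    refine lt_of_lt_of_le ?_ (hTlb x0 hx0 y0 hy0 hne0)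
    have := Real.rpow_pos_of_pos (dist_pos.mpr hne0) (-p)
    linarith
  have hcap0 : 0 < Riesz.cap p K := by
    rw [hcapK]; exact Real.rpow_pos_of_pos hT0 _
  have hdist_le : ∀ x ∈ K, ∀ y ∈ K, dist x y * 2 ^ (1 / p) ≤ Riesz.cap p K := by
    intro x hx y hy
    rcases eq_or_ne x y with rfl | hne
    · simpa using hcap0.le
    · have h1 := hTlb x hx y hy hne
      have h2 : (dist x y ^ (-p) / 2) ^ (-1 / p) ≤ T ^ (-1 / p) :=
        Real.rpow_le_rpow (by positivity) h1 hexp.le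
      rwa [RieszAux.rpow_calc hp (dist_pos.mpr hne), ← hcapK] at h2
  have hdiam_le : diam K ≤ Riesz.cap p K / 2 ^ (1 / p) := by
    refine diam_le_of_forall_dist_le (by positivity) fun x hx y hy => ?_
    rw [le_div_iff₀ h2p]
    exact hdist_le x hx y hy
  have part1 : Riesz.cap p K ≥ (2 : ℝ) ^ (1 / p) * Metric.diam K := by
    rw [ge_iff_le, mul_comm, ← le_div_iff₀ h2p]
    exact hdiam_le
  refine ⟨part1, ?_, ?_⟩
  · rw [div_le_iff₀ hcap0]
    calc diam K = 2 ^ (-1 / p) * (2 ^ (1 / p) * diam K) := by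
          rw [← mul_assoc, h2mul, one_mul]
      _ ≤ 2 ^ (-1 / p) * Riesz.cap p K := by
          exact mul_le_mul_of_nonneg_left part1 h2n.le
  · intro x y hne
    rw [cap_pair x y hne, Metric.diam_pair,
      div_mul_cancel_left₀ (dist_pos.mpr hne).ne']
    rw [neg_div, Real.rpow_neg two_pos.le]
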